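/- Symmetrically to the previous statement, the number of pairs (σ,π) with f(σ,π) ≤ A (the average objective value) is at least (m-1)!·(n-1)!. -/

import Mathlib

open scoped Classical

theorem stmt_3 (m n : ℕ) (hm : 0 < m) (hn : 0 < n)
    (q : Fin m → Fin m → Fin n → Fin n → ℝ)
    (c : Fin m → Fin m → ℝ) (d : Fin n → Fin n → ℝ)
    (f : Equiv.Perm (Fin m) → Equiv.Perm (Fin n) → ℝ)
    (hf : ∀ σ π, f σ π =
      (∑ i, ∑ k, q i (σ i) k (π k)) + (∑ i, c i (σ i)) + (∑ k, d k (π k)))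
    (A : ℝ)
    (hA : A = (∑ σ : Equiv.Perm (Fin m), ∑ π : Equiv.Perm (Fin n), f σ π)
        / ((Nat.factorial m * Nat.factorial n : ℕ) : ℝ)) :
    Nat.factorial (m - 1) * Nat.factorial (n - 1) ≤
      (Finset.univ.filter
        (fun p : Equiv.Perm (Fin m) × Equiv.Perm (Fin n) => f p.1 p.2 ≤ A)).card := by
  classical
  haveI : NeZero m := ⟨hm.ne'⟩
  haveI : NeZero n := ⟨hn.ne'⟩
  haveI : Nonempty (Fin m) := ⟨⟨0, hm⟩⟩
  haveI : Nonempty (Fin n) := ⟨⟨0, hn⟩⟩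
  set ga : Fin m → Equiv.Perm (Fin m) := fun a => Equiv.addRight a with hga
  set gb : Fin n → Equiv.Perm (Fin n) := fun b => Equiv.addRight b with hgb
  -- reindexing helpers
  have hσ : ∀ (σ : Equiv.Perm (Fin m)) (i : Fin m) (g : Fin m → ℝ),
      ∑ a : Fin m, g (σ (i + a)) = ∑ j, g j := by
    intro σ i g
    simpa using Equiv.sum_comp ((Equiv.addLeft i).trans σ) g
  have hπ : ∀ (π : Equiv.Perm (Fin n)) (k : Fin n) (g : Fin n → ℝ),
      ∑ b : Fin n, g (π (k + b)) = ∑ l, g l := by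
    intro π k g
    simpa using Equiv.sum_comp ((Equiv.addLeft k).trans π) g
  set K : ℝ := (∑ i, ∑ j, ∑ k, ∑ l, q i j k l)
      + (n : ℝ) * (∑ i, ∑ j, c i j) + (m : ℝ) * (∑ k, ∑ l, d k l) with hKdef
  -- each "coset" sums to K
  have coset : ∀ (σ : Equiv.Perm (Fin m)) (π : Equiv.Perm (Fin n)),
      ∑ a : Fin m, ∑ b : Fin n, f (σ * ga a) (π * gb b) = K := by
    intro σ π
    have happ : ∀ (a : Fin m) (i : Fin m), (σ * ga a) i = σ (i + a) := by
      intro a i; simp [hga, Equiv.Perm.mul_apply]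
    have happ' : ∀ (b : Fin n) (k : Fin n), (π * gb b) k = π (k + b) := by
      intro b k; simp [hgb, Equiv.Perm.mul_apply]
    have e1 : ∀ a : Fin m, ∑ b : Fin n, (∑ i, ∑ k, q i (σ (i + a)) k (π (k + b)))
        = ∑ i, ∑ k, ∑ l, q i (σ (i + a)) k l := by
      intro a
      rw [Finset.sum_comm]
      refine Finset.sum_congr rfl fun i _ => ?_
      rw [Finset.sum_comm]
      exact Finset.sum_congr rfl fun k _ => hπ π k (fun l => q i (σ (i + a)) k l)
    have e2 : ∑ a : Fin m, ∑ i, ∑ k, ∑ l, q i (σ (i + a)) k l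
        = ∑ i, ∑ j, ∑ k, ∑ l, q i j k l := by
      rw [Finset.sum_comm]
      exact Finset.sum_congr rfl fun i _ => hσ σ i (fun j => ∑ k, ∑ l, q i j k l)
    have e3 : ∑ a : Fin m, ∑ i, c i (σ (i + a)) = ∑ i, ∑ j, c i j := by
      rw [Finset.sum_comm]
      exact Finset.sum_congr rfl fun i _ => hσ σ i (c i)
    have e4 : ∑ b : Fin n, ∑ k, d k (π (k + b)) = ∑ k, ∑ l, d k l := by
      rw [Finset.sum_comm]
      exact Finset.sum_congr rfl fun k _ => hπ π k (d k)
    calc ∑ a : Fin m, ∑ b : Fin n, f (σ * ga a) (π * gb b)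
        = ∑ a : Fin m, ∑ b : Fin n,
            ((∑ i, ∑ k, q i (σ (i + a)) k (π (k + b)))
              + (∑ i, c i (σ (i + a))) + (∑ k, d k (π (k + b)))) := by
          refine Finset.sum_congr rfl fun a _ => Finset.sum_congr rfl fun b _ => ?_
          simp only [hf, happ, happ']
      _ = ∑ a : Fin m, ((∑ i, ∑ k, ∑ l, q i (σ (i + a)) k l)
              + (n : ℝ) * (∑ i, c i (σ (i + a))) + (∑ k, ∑ l, d k l)) := by
          refine Finset.sum_congr rfl fun a _ => ?_
          rw [Finset.sum_add_distrib, Finset.sum_add_distrib, e1, e4,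
            Finset.sum_const, Finset.card_univ, Fintype.card_fin, nsmul_eq_mul]
      _ = K := by
          rw [Finset.sum_add_distrib, Finset.sum_add_distrib, e2,
            Finset.sum_const, Finset.card_univ, Fintype.card_fin, nsmul_eq_mul,
            ← Finset.mul_sum, e3, hKdef]
  -- total sum identity
  have hswap : ∀ (a : Fin m) (b : Fin n),
      ∑ σ : Equiv.Perm (Fin m), ∑ π : Equiv.Perm (Fin n), f (σ * ga a) (π * gb b)
        = ∑ σ : Equiv.Perm (Fin m), ∑ π : Equiv.Perm (Fin n), f σ π := by
    intro a b
    calc ∑ σ : Equiv.Perm (Fin m), ∑ π : Equiv.Perm (Fin n), f (σ * ga a) (π * gb b)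
        = ∑ σ : Equiv.Perm (Fin m), ∑ π : Equiv.Perm (Fin n), f (σ * ga a) π := by
          refine Finset.sum_congr rfl fun σ _ => ?_
          simpa using Equiv.sum_comp (Equiv.mulRight (gb b)) (f (σ * ga a))
      _ = ∑ σ : Equiv.Perm (Fin m), ∑ π : Equiv.Perm (Fin n), f σ π := by
          simpa using Equiv.sum_comp (Equiv.mulRight (ga a))
            (fun σ => ∑ π : Equiv.Perm (Fin n), f σ π)
  have hfacR : ((Nat.factorial m * Nat.factorial n : ℕ) : ℝ) ≠ 0 := by
    positivity
  set T : ℝ := ∑ σ : Equiv.Perm (Fin m), ∑ π : Equiv.Perm (Fin n), f σ π with hT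
  have key : ((Nat.factorial m : ℝ) * (Nat.factorial n : ℝ)) * K = ((m : ℝ) * n) * T := by
    have h1 : ∑ σ : Equiv.Perm (Fin m), ∑ π : Equiv.Perm (Fin n),
        (∑ a : Fin m, ∑ b : Fin n, f (σ * ga a) (π * gb b))
        = ((Nat.factorial m : ℝ) * (Nat.factorial n : ℝ)) * K := by
      simp only [coset]
      simp [Finset.sum_const, Finset.card_univ, Fintype.card_perm, nsmul_eq_mul, mul_assoc]
    have h2 : ∑ σ : Equiv.Perm (Fin m), ∑ π : Equiv.Perm (Fin n),
        (∑ a : Fin m, ∑ b : Fin n, f (σ * ga a) (π * gb b))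
        = ((m : ℝ) * n) * T := by
      have s1 : ∀ σ : Equiv.Perm (Fin m), ∑ π : Equiv.Perm (Fin n),
          (∑ a : Fin m, ∑ b : Fin n, f (σ * ga a) (π * gb b))
          = ∑ a : Fin m, ∑ π : Equiv.Perm (Fin n), ∑ b : Fin n, f (σ * ga a) (π * gb b) :=
        fun σ => Finset.sum_comm
      rw [Finset.sum_congr rfl fun σ _ => s1 σ, Finset.sum_comm]
      have s2 : ∀ a : Fin m, ∀ σ : Equiv.Perm (Fin m),
          ∑ π : Equiv.Perm (Fin n), ∑ b : Fin n, f (σ * ga a) (π * gb b)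
          = ∑ b : Fin n, ∑ π : Equiv.Perm (Fin n), f (σ * ga a) (π * gb b) :=
        fun a σ => Finset.sum_comm
      calc ∑ a : Fin m, ∑ σ : Equiv.Perm (Fin m), ∑ π : Equiv.Perm (Fin n),
              ∑ b : Fin n, f (σ * ga a) (π * gb b)
          = ∑ a : Fin m, ∑ b : Fin n, ∑ σ : Equiv.Perm (Fin m),
              ∑ π : Equiv.Perm (Fin n), f (σ * ga a) (π * gb b) := by
            refine Finset.sum_congr rfl fun a _ => ?_
            rw [Finset.sum_congr rfl fun σ _ => s2 a σ, Finset.sum_comm]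
        _ = ∑ a : Fin m, ∑ b : Fin n, T := by
            exact Finset.sum_congr rfl fun a _ => Finset.sum_congr rfl fun b _ => hswap a b
        _ = ((m : ℝ) * n) * T := by
            simp [Finset.sum_const, Finset.card_univ, Fintype.card_fin, nsmul_eq_mul, mul_assoc]
    rw [← h1, h2]
  have hKA : K = ((m : ℝ) * n) * A := by
    rw [hA]
    field_simp
    push_cast at key ⊢
    linear_combination key
  -- existence of a good translate in every coset
  have hex : ∀ p : Equiv.Perm (Fin m) × Equiv.Perm (Fin n),
      ∃ ab : Fin m × Fin n, f (p.1 * ga ab.1) (p.2 * gb ab.2) ≤ A := by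
    intro p
    by_contra h
    push_neg at h
    have hlt : ((m : ℝ) * n) * A < ∑ a : Fin m, ∑ b : Fin n, f (p.1 * ga a) (p.2 * gb b) := by
      have : ∑ a : Fin m, ∑ b : Fin n, A < ∑ a : Fin m, ∑ b : Fin n, f (p.1 * ga a) (p.2 * gb b) := by
        refine Finset.sum_lt_sum_of_nonempty Finset.univ_nonempty fun a _ => ?_
        exact Finset.sum_lt_sum_of_nonempty Finset.univ_nonempty fun b _ => h (a, b)
      calc ((m : ℝ) * n) * A = ∑ _a : Fin m, ∑ _b : Fin n, A := by
            simp [Finset.sum_const, Finset.card_univ, Fintype.card_fin, nsmul_eq_mul, mul_assoc]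
        _ < _ := this
    rw [coset p.1 p.2, hKA] at hlt
    exact lt_irrefl _ hlt
  choose ab hab using hex
  set F : Equiv.Perm (Fin m) × Equiv.Perm (Fin n) → Equiv.Perm (Fin m) × Equiv.Perm (Fin n) :=
    fun p => (p.1 * ga (ab p).1, p.2 * gb (ab p).2) with hF
  have himg : Finset.univ.image F ⊆ Finset.univ.filter
      (fun p : Equiv.Perm (Fin m) × Equiv.Perm (Fin n) => f p.1 p.2 ≤ A) := by
    intro y hy
    simp only [Finset.mem_image, Finset.mem_univ, true_and] at hy
    obtain ⟨p, rfl⟩ := hy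
    simp only [Finset.mem_filter, Finset.mem_univ, true_and]
    exact hab p
  have hcount : (Finset.univ : Finset (Equiv.Perm (Fin m) × Equiv.Perm (Fin n))).card
      ≤ (m * n) * (Finset.univ.image F).card := by
    apply Finset.card_le_mul_card_image
    intro y _
    set G : Fin m × Fin n → Equiv.Perm (Fin m) × Equiv.Perm (Fin n) :=
      fun ab' => (y.1 * (ga ab'.1)⁻¹, y.2 * (gb ab'.2)⁻¹) with hG
    have hsub : Finset.univ.filter (fun p => F p = y) ⊆ Finset.univ.image G := by
      intro p hp
      simp only [Finset.mem_filter, Finset.mem_univ, true_and] at hp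
      simp only [Finset.mem_image, Finset.mem_univ, true_and]
      refine ⟨ab p, ?_⟩
      have h1 : y.1 = p.1 * ga (ab p).1 := by rw [← hp]
      have h2 : y.2 = p.2 * gb (ab p).2 := by rw [← hp]
      simp [hG, h1, h2, mul_assoc]
    calc (Finset.univ.filter (fun p => F p = y)).card
        ≤ (Finset.univ.image G).card := Finset.card_le_card hsub
      _ ≤ (Finset.univ : Finset (Fin m × Fin n)).card := Finset.card_image_le
      _ = m * n := by simp [Finset.card_univ]
  have hfinal : Nat.factorial m * Nat.factorial n ≤
      (m * n) * (Finset.univ.filter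
        (fun p : Equiv.Perm (Fin m) × Equiv.Perm (Fin n) => f p.1 p.2 ≤ A)).card := by
    calc Nat.factorial m * Nat.factorial n
        = (Finset.univ : Finset (Equiv.Perm (Fin m) × Equiv.Perm (Fin n))).card := by
          simp [Finset.card_univ, Fintype.card_prod, Fintype.card_perm]
      _ ≤ (m * n) * (Finset.univ.image F).card := hcount
      _ ≤ _ := Nat.mul_le_mul_left _ (Finset.card_le_card himg)
  have hmn : m * n * (Nat.factorial (m - 1) * Nat.factorial (n - 1))
      = Nat.factorial m * Nat.factorial n := by
    rw [← Nat.mul_factorial_pred hm.ne', ← Nat.mul_factorial_pred hn.ne']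
    ring
  refine Nat.le_of_mul_le_mul_left ?_ (Nat.mul_pos hm hn)
  rw [hmn]
  exact hfinal
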